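/- A finite simple graph G satisfies c₂(G) ≤ 2 if and only if G contains none of the following eight graphs as an induced subgraph: P₄ (the path on 4 vertices); P₃ + K₂ (the disjoint union of a path on 3 vertices and a single edge); 3K₂ (the disjoint union of three edges); the dart (the graph obtained from K₄ minus one edge by adding a new vertex adjacent to exactly one of the two degree-3 vertices); the graph ⋉ (a triangle together with two new vertices, each adjacent to exactly one and the same vertex of the triangle); the full house (K₄ together with a new vertex adjacent to exactly two vertices of the K₄); K₃,₃ (the complete bipartite graph with both parts of size 3); and W₅ (the wheel on 5 vertices: a 4-cycle together with a vertex adjacent to all four cycle vertices). -/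

import Mathlib

open Matrix

/-- A subgraph complementation system for `G`: a finite collection (multiset) of subsets of
vertices such that two distinct vertices are adjacent iff they lie together in an odd
number of the sets. -/
def IsSCS {V : Type*} [DecidableEq V] (G : SimpleGraph V) (𝒞 : Multiset (Finset V)) : Prop :=
  ∀ u v : V, u ≠ v →
    (G.Adj u v ↔ Odd (Multiset.card (𝒞.filter (fun C => u ∈ C ∧ v ∈ C))))

/-- The subgraph complementation number `c₂(G)`: the minimum cardinality of a subgraph
complementation system for `G`. -/
noncomputable def c2 {V : Type*} [DecidableEq V] (G : SimpleGraph V) : ℕ :=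
  sInf {k | ∃ 𝒞 : Multiset (Finset V), IsSCS G 𝒞 ∧ Multiset.card 𝒞 = k}

/-- A symmetric matrix over `F₂` fits `G` if its off-diagonal entries record adjacency. -/
def FitsF2 {V : Type*} (G : SimpleGraph V) (A : Matrix V V (ZMod 2)) : Prop :=
  A.IsSymm ∧ ∀ u v : V, u ≠ v → (A u v = 1 ↔ G.Adj u v)

/-- The minimum rank of `G` over `F₂`: the minimum rank of a symmetric matrix over `F₂`
that fits `G`. -/
noncomputable def mrF2 {V : Type*} [Fintype V] (G : SimpleGraph V) : ℕ :=
  sInf {k | ∃ A : Matrix V V (ZMod 2), FitsF2 G A ∧ A.rank = k}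

/-- The graph on `Fin n` with the given list of edges. -/
def graphOfEdges (n : ℕ) (l : List (Fin n × Fin n)) : SimpleGraph (Fin n) :=
  SimpleGraph.fromRel (fun u v => (u, v) ∈ l)

/-- The path on 4 vertices. -/
def pathP4 : SimpleGraph (Fin 4) := graphOfEdges 4 [(0, 1), (1, 2), (2, 3)]

/-- The disjoint union of a path on 3 vertices and a single edge. -/
def p3PlusK2 : SimpleGraph (Fin 5) := graphOfEdges 5 [(0, 1), (1, 2), (3, 4)]

/-- The disjoint union of three edges. -/
def threeK2 : SimpleGraph (Fin 6) := graphOfEdges 6 [(0, 1), (2, 3), (4, 5)]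

/-- The dart: `K₄` minus the edge `{2,3}`, together with a new vertex `4` adjacent to the
degree-3 vertex `0`. -/
def dart : SimpleGraph (Fin 5) :=
  graphOfEdges 5 [(0, 1), (0, 2), (0, 3), (1, 2), (1, 3), (0, 4)]

/-- The graph `⋉`: a triangle `0,1,2` together with two new vertices `3`, `4`, each adjacent
to the same triangle vertex `0`. -/
def ltimesGraph : SimpleGraph (Fin 5) :=
  graphOfEdges 5 [(0, 1), (1, 2), (0, 2), (0, 3), (0, 4)]

/-- The full house: `K₄` on `0,1,2,3` together with a new vertex `4` adjacent to exactly the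
two vertices `0` and `1`. -/
def fullHouse : SimpleGraph (Fin 5) :=
  graphOfEdges 5 [(0, 1), (0, 2), (0, 3), (1, 2), (1, 3), (2, 3), (4, 0), (4, 1)]

/-- The complete bipartite graph `K₃,₃` with parts `{0,1,2}` and `{3,4,5}`. -/
def k33 : SimpleGraph (Fin 6) :=
  graphOfEdges 6 [(0, 3), (0, 4), (0, 5), (1, 3), (1, 4), (1, 5), (2, 3), (2, 4), (2, 5)]

/-- The wheel `W₅`: a 4-cycle `1,2,3,4` together with the hub `0` adjacent to all of them. -/
def wheelW5 : SimpleGraph (Fin 5) :=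
  graphOfEdges 5 [(0, 1), (0, 2), (0, 3), (0, 4), (1, 2), (2, 3), (3, 4), (4, 1)]

/-- `G` contains `H` as an induced subgraph. -/
def HasInduced {W V : Type*} (H : SimpleGraph W) (G : SimpleGraph V) : Prop :=
  Nonempty (H ↪g G)

section Setup
variable {V : Type*} [DecidableEq V]

def GoodSets (G : SimpleGraph V) : Prop :=
  ∃ C₁ C₂ : Finset V, ∀ u v : V, u ≠ v →
    (G.Adj u v ↔ ¬((u ∈ C₁ ∧ v ∈ C₁) ↔ (u ∈ C₂ ∧ v ∈ C₂)))

lemma odd_card_filter_pair (C₁ C₂ : Finset V) (u v : V) :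
    Odd (Multiset.card (Multiset.filter (fun C => u ∈ C ∧ v ∈ C) (C₁ ::ₘ C₂ ::ₘ 0)))
      ↔ ¬((u ∈ C₁ ∧ v ∈ C₁) ↔ (u ∈ C₂ ∧ v ∈ C₂)) := by
  rw [Multiset.filter_cons, Multiset.filter_cons, Multiset.filter_zero]
  by_cases h1 : u ∈ C₁ ∧ v ∈ C₁ <;> by_cases h2 : u ∈ C₂ ∧ v ∈ C₂ <;>
    simp [h1, h2, Nat.odd_iff] <;> tauto

lemma GoodSets.c2_le {G : SimpleGraph V} (h : GoodSets G) : c2 G ≤ 2 := by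
  obtain ⟨C₁, C₂, h⟩ := h
  apply Nat.sInf_le
  refine ⟨C₁ ::ₘ C₂ ::ₘ 0, ?_, by simp⟩
  intro u v huv
  rw [h u v huv, odd_card_filter_pair]

lemma exists_scs [Fintype V] (G : SimpleGraph V) : ∃ 𝒞 : Multiset (Finset V), IsSCS G 𝒞 := by
  classical
  refine ⟨G.edgeFinset.val.map (fun e => Finset.univ.filter (fun x => x ∈ e)), ?_⟩
  intro u v huv
  rw [Multiset.filter_map, Multiset.card_map]
  have h0 : (Multiset.filter ((fun C => u ∈ C ∧ v ∈ C) ∘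
      (fun e : Sym2 V => Finset.univ.filter (fun x => x ∈ e))) G.edgeFinset.val)
      = (G.edgeFinset.filter (fun e => u ∈ e ∧ v ∈ e)).val := by
    rw [Finset.filter_val]
    apply Multiset.filter_congr; intro e he; simp
  rw [h0]
  by_cases hadj : G.Adj u v
  · have h1 : G.edgeFinset.filter (fun e => u ∈ e ∧ v ∈ e) = {s(u,v)} := by
      apply Finset.eq_singleton_iff_unique_mem.2
      constructor
      · simp [SimpleGraph.mem_edgeFinset, hadj]
      · intro e he
        simp only [Finset.mem_filter] at he
        exact (Sym2.mem_and_mem_iff huv).1 he.2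
    simp [hadj, h1]
  · have h1 : G.edgeFinset.filter (fun e => u ∈ e ∧ v ∈ e) = ∅ := by
      apply Finset.filter_eq_empty_iff.2
      intro e he hmem
      rw [(Sym2.mem_and_mem_iff huv).1 hmem] at he
      rw [SimpleGraph.mem_edgeFinset, SimpleGraph.mem_edgeSet] at he
      exact hadj he
    simp [hadj, h1, Nat.odd_iff]

lemma goodSets_of_c2_le [Fintype V] {G : SimpleGraph V} (h : c2 G ≤ 2) : GoodSets G := by
  obtain ⟨𝒞₀, h𝒞₀⟩ := exists_scs G
  have hmem : c2 G ∈ {k | ∃ 𝒞 : Multiset (Finset V), IsSCS G 𝒞 ∧ Multiset.card 𝒞 = k} :=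
    Nat.sInf_mem ⟨_, ⟨𝒞₀, h𝒞₀, rfl⟩⟩
  obtain ⟨𝒞, hscs, hcard⟩ := hmem
  have hpad : ∀ 𝒟 : Multiset (Finset V), IsSCS G 𝒟 → IsSCS G ((∅ : Finset V) ::ₘ 𝒟) := by
    intro 𝒟 h𝒟 u v huv
    rw [Multiset.filter_cons_of_neg _ (by simp)]
    exact h𝒟 u v huv
  have hle : Multiset.card 𝒞 ≤ 2 := by rw [hcard]; exact h
  have h2 : ∃ 𝒟 : Multiset (Finset V), IsSCS G 𝒟 ∧ Multiset.card 𝒟 = 2 := by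
    interval_cases hc : (Multiset.card 𝒞)
    · exact ⟨_, hpad _ (hpad _ hscs), by simp [Multiset.card_eq_zero.1 hc]⟩
    · exact ⟨_, hpad _ hscs, by simp [hc]⟩
    · exact ⟨𝒞, hscs, hc⟩
  obtain ⟨𝒟, hscsD, hcardD⟩ := h2
  obtain ⟨C₁, C₂, rfl⟩ := Multiset.card_eq_two.1 hcardD
  refine ⟨C₁, C₂, fun u v huv => ?_⟩
  rw [hscsD u v huv]
  exact odd_card_filter_pair C₁ C₂ u v

end Setup

section Hered

lemma GoodSets.hered {W V : Type*} [DecidableEq V] [DecidableEq W] [Fintype W]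
    {H : SimpleGraph W} {G : SimpleGraph V} (hG : GoodSets G) (hind : HasInduced H G) :
    GoodSets H := by
  obtain ⟨C₁, C₂, h⟩ := hG
  obtain ⟨f⟩ := hind
  refine ⟨Finset.univ.filter (fun w => f w ∈ C₁), Finset.univ.filter (fun w => f w ∈ C₂),
    fun u v huv => ?_⟩
  have hne : f u ≠ f v := fun he => huv (f.injective he)
  have := h (f u) (f v) hne
  rw [f.map_adj_iff] at this
  rw [this]
  simp

lemma hasInduced_mk {n : ℕ} (H : SimpleGraph (Fin n)) {V : Type*} (G : SimpleGraph V)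
    (f : Fin n → V) (hinj : ∀ i j : Fin n, i ≠ j → f i ≠ f j)
    (hadj : ∀ i j : Fin n, G.Adj (f i) (f j) ↔ H.Adj i j) : HasInduced H G := by
  refine ⟨⟨⟨f, fun a b hab => ?_⟩, hadj _ _⟩⟩
  by_contra hne
  exact hinj a b hne hab

end Hered

section Decides

instance graphOfEdges.decRel {n : ℕ} {l : List (Fin n × Fin n)} :
    DecidableRel (graphOfEdges n l).Adj := fun a b =>
  decidable_of_iff (a ≠ b ∧ ((a,b) ∈ l ∨ (b,a) ∈ l))
    (by simp [graphOfEdges, SimpleGraph.fromRel_adj])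

lemma not_good_pathP4 : ¬ GoodSets pathP4 := by unfold GoodSets pathP4; decide
lemma not_good_p3PlusK2 : ¬ GoodSets p3PlusK2 := by unfold GoodSets p3PlusK2; decide
set_option maxRecDepth 40000 in
lemma not_good_threeK2 : ¬ GoodSets threeK2 := by unfold GoodSets threeK2; decide
lemma not_good_dart : ¬ GoodSets dart := by unfold GoodSets dart; decide
lemma not_good_ltimes : ¬ GoodSets ltimesGraph := by unfold GoodSets ltimesGraph; decide
lemma not_good_fullHouse : ¬ GoodSets fullHouse := by unfold GoodSets fullHouse; decide
set_option maxRecDepth 40000 in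
lemma not_good_k33 : ¬ GoodSets k33 := by unfold GoodSets k33; decide
lemma not_good_wheelW5 : ¬ GoodSets wheelW5 := by unfold GoodSets wheelW5; decide

end Decides

section Valid
variable {V : Type*} [DecidableEq V] {G : SimpleGraph V}

structure IsValid (G : SimpleGraph V) (A B D : Finset V) : Prop where
  hA : ∀ u ∈ A, ∀ v ∈ A, u ≠ v → G.Adj u v
  hB : ∀ u ∈ B, ∀ v ∈ B, u ≠ v → G.Adj u v
  hD : ∀ u ∈ D, ∀ v ∈ D, u ≠ v → ¬ G.Adj u v
  hAB : ∀ u ∈ A, ∀ v ∈ B, ¬ G.Adj u v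
  hAD : ∀ u ∈ A, ∀ v ∈ D, G.Adj u v
  hBD : ∀ u ∈ B, ∀ v ∈ D, G.Adj u v
  hABd : Disjoint A B
  hout : ∀ v, v ∉ A → v ∉ B → v ∉ D → ∀ u, ¬ G.Adj v u

lemma IsValid.goodSets {A B D : Finset V} (h : IsValid G A B D) : GoodSets G := by
  classical
  have hADx : ∀ x, x ∈ A → x ∈ D → False := fun x h1 h2 => G.irrefl (h.hAD x h1 x h2)
  have hBDx : ∀ x, x ∈ B → x ∈ D → False := fun x h1 h2 => G.irrefl (h.hBD x h1 x h2)
  have hABx : ∀ x, x ∈ A → x ∈ B → False := fun x h1 h2 => (Finset.disjoint_left.1 h.hABd h1) h2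
  have status : ∀ x : V, (x ∈ A ∧ x ∉ B ∧ x ∉ D) ∨ (x ∈ B ∧ x ∉ A ∧ x ∉ D) ∨
      (x ∈ D ∧ x ∉ A ∧ x ∉ B) ∨ (x ∉ A ∧ x ∉ B ∧ x ∉ D) := by
    intro x
    by_cases hxA : x ∈ A
    · exact Or.inl ⟨hxA, fun hb => hABx x hxA hb, fun hd => hADx x hxA hd⟩
    · by_cases hxB : x ∈ B
      · exact Or.inr (Or.inl ⟨hxB, hxA, fun hd => hBDx x hxB hd⟩)
      · by_cases hxD : x ∈ D
        · exact Or.inr (Or.inr (Or.inl ⟨hxD, hxA, hxB⟩))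
        · exact Or.inr (Or.inr (Or.inr ⟨hxA, hxB, hxD⟩))
  refine ⟨A ∪ D, B ∪ D, fun u v huv => ?_⟩
  simp only [Finset.mem_union]
  obtain ⟨hu1, hu2, hu3⟩ | ⟨hu1, hu2, hu3⟩ | ⟨hu1, hu2, hu3⟩ | ⟨hu1, hu2, hu3⟩ := status u <;>
    obtain ⟨hv1, hv2, hv3⟩ | ⟨hv1, hv2, hv3⟩ | ⟨hv1, hv2, hv3⟩ | ⟨hv1, hv2, hv3⟩ := status v
  · exact iff_of_true (h.hA u hu1 v hv1 huv) (by tauto)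
  · exact iff_of_false (h.hAB u hu1 v hv1) (by tauto)
  · exact iff_of_true (h.hAD u hu1 v hv1) (by tauto)
  · exact iff_of_false (fun hadj => h.hout v hv1 hv2 hv3 u (G.adj_symm hadj)) (by tauto)
  · exact iff_of_false (fun hadj => h.hAB v hv1 u hu1 (G.adj_symm hadj)) (by tauto)
  · exact iff_of_true (h.hB u hu1 v hv1 huv) (by tauto)
  · exact iff_of_true (h.hBD u hu1 v hv1) (by tauto)
  · exact iff_of_false (fun hadj => h.hout v hv1 hv2 hv3 u (G.adj_symm hadj)) (by tauto)
  · exact iff_of_true (G.adj_symm (h.hAD v hv1 u hu1)) (by tauto)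
  · exact iff_of_true (G.adj_symm (h.hBD v hv1 u hu1)) (by tauto)
  · exact iff_of_false (h.hD u hu1 v hv1 huv) (by tauto)
  · exact iff_of_false (fun hadj => h.hout v hv1 hv2 hv3 u (G.adj_symm hadj)) (by tauto)
  · exact iff_of_false (h.hout u hu1 hu2 hu3 v) (by tauto)
  · exact iff_of_false (h.hout u hu1 hu2 hu3 v) (by tauto)
  · exact iff_of_false (h.hout u hu1 hu2 hu3 v) (by tauto)
  · exact iff_of_false (h.hout u hu1 hu2 hu3 v) (by tauto)

end Valid

section Finders
variable {V : Type*} [DecidableEq V] {G : SimpleGraph V}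

lemma ne_adj {x y z : V} (h1 : G.Adj x z) (h2 : ¬ G.Adj y z) : x ≠ y :=
  fun he => h2 (he ▸ h1)

instance : DecidableRel pathP4.Adj := by unfold pathP4; infer_instance
instance : DecidableRel p3PlusK2.Adj := by unfold p3PlusK2; infer_instance
instance : DecidableRel threeK2.Adj := by unfold threeK2; infer_instance
instance : DecidableRel dart.Adj := by unfold dart; infer_instance
instance : DecidableRel ltimesGraph.Adj := by unfold ltimesGraph; infer_instance
instance : DecidableRel fullHouse.Adj := by unfold fullHouse; infer_instance
instance : DecidableRel k33.Adj := by unfold k33; infer_instance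
instance : DecidableRel wheelW5.Adj := by unfold wheelW5; infer_instance

lemma findP4 (h : ¬ HasInduced pathP4 G) {a b c d : V}
    (e1 : G.Adj a b) (e2 : G.Adj b c) (e3 : G.Adj c d)
    (n1 : ¬G.Adj a c) (n2 : ¬G.Adj a d) (n3 : ¬G.Adj b d) : False := by
  have e1' := G.adj_symm e1; have e2' := G.adj_symm e2; have e3' := G.adj_symm e3
  have n1' : ¬G.Adj c a := fun hh => n1 (G.adj_symm hh)
  have n2' : ¬G.Adj d a := fun hh => n2 (G.adj_symm hh)
  have n3' : ¬G.Adj d b := fun hh => n3 (G.adj_symm hh)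
  have h12 : a ≠ b := e1.ne
  have h21 : b ≠ a := e1'.ne
  have h23 : b ≠ c := e2.ne
  have h32 : c ≠ b := e2'.ne
  have h34 : c ≠ d := e3.ne
  have h43 : d ≠ c := e3'.ne
  have h31 : c ≠ a := ne_adj e3 n2
  have h13 : a ≠ c := h31.symm
  have h14 : a ≠ d := ne_adj e1 n3'
  have h41 : d ≠ a := h14.symm
  have h24 : b ≠ d := ne_adj e1' n2'
  have h42 : d ≠ b := h24.symm
  refine h (hasInduced_mk _ _ ![a, b, c, d] (fun i j hij => ?_) (fun i j => ?_))
  · fin_cases i <;> fin_cases j <;> first | exact absurd rfl hij | (simp; assumption)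
  · fin_cases i <;> fin_cases j <;> simp <;>
      first
        | (refine iff_of_false ?_ (by decide); exact G.irrefl _)
        | (refine iff_of_true ?_ (by decide); assumption)
        | (refine iff_of_false ?_ (by decide); assumption)

lemma findP3K2 (h : ¬ HasInduced p3PlusK2 G)
    {a b c d e : V}
    (e01 : G.Adj a b) (e12 : G.Adj b c) (e34 : G.Adj d e) (n02 : ¬G.Adj a c) (n03 : ¬G.Adj a d) (n04 : ¬G.Adj a e) (n13 : ¬G.Adj b d) (n14 : ¬G.Adj b e) (n23 : ¬G.Adj c d) (n24 : ¬G.Adj c e) (x02 : a ≠ c) : False := by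
  have e01' : G.Adj b a := G.adj_symm e01
  have e12' : G.Adj c b := G.adj_symm e12
  have e34' : G.Adj e d := G.adj_symm e34
  have n02' : ¬G.Adj c a := fun hh => n02 (G.adj_symm hh)
  have n03' : ¬G.Adj d a := fun hh => n03 (G.adj_symm hh)
  have n04' : ¬G.Adj e a := fun hh => n04 (G.adj_symm hh)
  have n13' : ¬G.Adj d b := fun hh => n13 (G.adj_symm hh)
  have n14' : ¬G.Adj e b := fun hh => n14 (G.adj_symm hh)
  have n23' : ¬G.Adj d c := fun hh => n23 (G.adj_symm hh)
  have n24' : ¬G.Adj e c := fun hh => n24 (G.adj_symm hh)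
  have h01 : a ≠ b := e01.ne
  have h10 : b ≠ a := h01.symm
  have h02 : a ≠ c := x02
  have h20 : c ≠ a := x02.symm
  have h03 : a ≠ d := ne_adj e01 n13'
  have h30 : d ≠ a := h03.symm
  have h04 : a ≠ e := ne_adj e01 n14'
  have h40 : e ≠ a := h04.symm
  have h12 : b ≠ c := e12.ne
  have h21 : c ≠ b := h12.symm
  have h13 : b ≠ d := ne_adj e01' n03'
  have h31 : d ≠ b := h13.symm
  have h14 : b ≠ e := ne_adj e01' n04'
  have h41 : e ≠ b := h14.symm
  have h23 : c ≠ d := ne_adj e12' n13'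
  have h32 : d ≠ c := h23.symm
  have h24 : c ≠ e := ne_adj e12' n14'
  have h42 : e ≠ c := h24.symm
  have h34 : d ≠ e := e34.ne
  have h43 : e ≠ d := h34.symm
  refine h (hasInduced_mk _ _ ![a, b, c, d, e] (fun i j hij => ?_) (fun i j => ?_))
  · fin_cases i <;> fin_cases j <;> first | exact absurd rfl hij | (simp; assumption)
  · fin_cases i <;> fin_cases j <;> simp <;>
      first
        | (refine iff_of_false ?_ (by decide); exact G.irrefl _)
        | (refine iff_of_true ?_ (by decide); assumption)
        | (refine iff_of_false ?_ (by decide); assumption)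

lemma find3K2 (h : ¬ HasInduced threeK2 G)
    {a b c d e f : V}
    (e01 : G.Adj a b) (e23 : G.Adj c d) (e45 : G.Adj e f) (n02 : ¬G.Adj a c) (n03 : ¬G.Adj a d) (n04 : ¬G.Adj a e) (n05 : ¬G.Adj a f) (n12 : ¬G.Adj b c) (n13 : ¬G.Adj b d) (n14 : ¬G.Adj b e) (n15 : ¬G.Adj b f) (n24 : ¬G.Adj c e) (n25 : ¬G.Adj c f) (n34 : ¬G.Adj d e) (n35 : ¬G.Adj d f) : False := by
  have e01' : G.Adj b a := G.adj_symm e01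
  have e23' : G.Adj d c := G.adj_symm e23
  have e45' : G.Adj f e := G.adj_symm e45
  have n02' : ¬G.Adj c a := fun hh => n02 (G.adj_symm hh)
  have n03' : ¬G.Adj d a := fun hh => n03 (G.adj_symm hh)
  have n04' : ¬G.Adj e a := fun hh => n04 (G.adj_symm hh)
  have n05' : ¬G.Adj f a := fun hh => n05 (G.adj_symm hh)
  have n12' : ¬G.Adj c b := fun hh => n12 (G.adj_symm hh)
  have n13' : ¬G.Adj d b := fun hh => n13 (G.adj_symm hh)
  have n14' : ¬G.Adj e b := fun hh => n14 (G.adj_symm hh)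
  have n15' : ¬G.Adj f b := fun hh => n15 (G.adj_symm hh)
  have n24' : ¬G.Adj e c := fun hh => n24 (G.adj_symm hh)
  have n25' : ¬G.Adj f c := fun hh => n25 (G.adj_symm hh)
  have n34' : ¬G.Adj e d := fun hh => n34 (G.adj_symm hh)
  have n35' : ¬G.Adj f d := fun hh => n35 (G.adj_symm hh)
  have h01 : a ≠ b := e01.ne
  have h10 : b ≠ a := h01.symm
  have h02 : a ≠ c := ne_adj e01 n12'
  have h20 : c ≠ a := h02.symm
  have h03 : a ≠ d := ne_adj e01 n13'
  have h30 : d ≠ a := h03.symm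
  have h04 : a ≠ e := ne_adj e01 n14'
  have h40 : e ≠ a := h04.symm
  have h05 : a ≠ f := ne_adj e01 n15'
  have h50 : f ≠ a := h05.symm
  have h12 : b ≠ c := ne_adj e01' n02'
  have h21 : c ≠ b := h12.symm
  have h13 : b ≠ d := ne_adj e01' n03'
  have h31 : d ≠ b := h13.symm
  have h14 : b ≠ e := ne_adj e01' n04'
  have h41 : e ≠ b := h14.symm
  have h15 : b ≠ f := ne_adj e01' n05'
  have h51 : f ≠ b := h15.symm
  have h23 : c ≠ d := e23.ne
  have h32 : d ≠ c := h23.symm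
  have h24 : c ≠ e := ne_adj e23 n34'
  have h42 : e ≠ c := h24.symm
  have h25 : c ≠ f := ne_adj e23 n35'
  have h52 : f ≠ c := h25.symm
  have h34 : d ≠ e := ne_adj e23' n24'
  have h43 : e ≠ d := h34.symm
  have h35 : d ≠ f := ne_adj e23' n25'
  have h53 : f ≠ d := h35.symm
  have h45 : e ≠ f := e45.ne
  have h54 : f ≠ e := h45.symm
  refine h (hasInduced_mk _ _ ![a, b, c, d, e, f] (fun i j hij => ?_) (fun i j => ?_))
  · fin_cases i <;> fin_cases j <;> first | exact absurd rfl hij | (simp; assumption)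
  · fin_cases i <;> fin_cases j <;> simp <;>
      first
        | (refine iff_of_false ?_ (by decide); exact G.irrefl _)
        | (refine iff_of_true ?_ (by decide); assumption)
        | (refine iff_of_false ?_ (by decide); assumption)

lemma findDart (h : ¬ HasInduced dart G)
    {a b c d e : V}
    (e01 : G.Adj a b) (e02 : G.Adj a c) (e03 : G.Adj a d) (e12 : G.Adj b c) (e13 : G.Adj b d) (e04 : G.Adj a e) (n14 : ¬G.Adj b e) (n23 : ¬G.Adj c d) (n24 : ¬G.Adj c e) (n34 : ¬G.Adj d e) (x23 : c ≠ d) : False := by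
  have e01' : G.Adj b a := G.adj_symm e01
  have e02' : G.Adj c a := G.adj_symm e02
  have e03' : G.Adj d a := G.adj_symm e03
  have e12' : G.Adj c b := G.adj_symm e12
  have e13' : G.Adj d b := G.adj_symm e13
  have e04' : G.Adj e a := G.adj_symm e04
  have n14' : ¬G.Adj e b := fun hh => n14 (G.adj_symm hh)
  have n23' : ¬G.Adj d c := fun hh => n23 (G.adj_symm hh)
  have n24' : ¬G.Adj e c := fun hh => n24 (G.adj_symm hh)
  have n34' : ¬G.Adj e d := fun hh => n34 (G.adj_symm hh)
  have h01 : a ≠ b := e01.ne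
  have h10 : b ≠ a := h01.symm
  have h02 : a ≠ c := e02.ne
  have h20 : c ≠ a := h02.symm
  have h03 : a ≠ d := e03.ne
  have h30 : d ≠ a := h03.symm
  have h04 : a ≠ e := e04.ne
  have h40 : e ≠ a := h04.symm
  have h12 : b ≠ c := e12.ne
  have h21 : c ≠ b := h12.symm
  have h13 : b ≠ d := e13.ne
  have h31 : d ≠ b := h13.symm
  have h14 : b ≠ e := ne_adj e12 n24'
  have h41 : e ≠ b := h14.symm
  have h23 : c ≠ d := x23
  have h32 : d ≠ c := x23.symm
  have h24 : c ≠ e := ne_adj e12' n14'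
  have h42 : e ≠ c := h24.symm
  have h34 : d ≠ e := ne_adj e13' n14'
  have h43 : e ≠ d := h34.symm
  refine h (hasInduced_mk _ _ ![a, b, c, d, e] (fun i j hij => ?_) (fun i j => ?_))
  · fin_cases i <;> fin_cases j <;> first | exact absurd rfl hij | (simp; assumption)
  · fin_cases i <;> fin_cases j <;> simp <;>
      first
        | (refine iff_of_false ?_ (by decide); exact G.irrefl _)
        | (refine iff_of_true ?_ (by decide); assumption)
        | (refine iff_of_false ?_ (by decide); assumption)

lemma findLtimes (h : ¬ HasInduced ltimesGraph G)
    {a b c d e : V}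
    (e01 : G.Adj a b) (e12 : G.Adj b c) (e02 : G.Adj a c) (e03 : G.Adj a d) (e04 : G.Adj a e) (n13 : ¬G.Adj b d) (n14 : ¬G.Adj b e) (n23 : ¬G.Adj c d) (n24 : ¬G.Adj c e) (n34 : ¬G.Adj d e) (x34 : d ≠ e) : False := by
  have e01' : G.Adj b a := G.adj_symm e01
  have e12' : G.Adj c b := G.adj_symm e12
  have e02' : G.Adj c a := G.adj_symm e02
  have e03' : G.Adj d a := G.adj_symm e03
  have e04' : G.Adj e a := G.adj_symm e04
  have n13' : ¬G.Adj d b := fun hh => n13 (G.adj_symm hh)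
  have n14' : ¬G.Adj e b := fun hh => n14 (G.adj_symm hh)
  have n23' : ¬G.Adj d c := fun hh => n23 (G.adj_symm hh)
  have n24' : ¬G.Adj e c := fun hh => n24 (G.adj_symm hh)
  have n34' : ¬G.Adj e d := fun hh => n34 (G.adj_symm hh)
  have h01 : a ≠ b := e01.ne
  have h10 : b ≠ a := h01.symm
  have h02 : a ≠ c := e02.ne
  have h20 : c ≠ a := h02.symm
  have h03 : a ≠ d := e03.ne
  have h30 : d ≠ a := h03.symm
  have h04 : a ≠ e := e04.ne
  have h40 : e ≠ a := h04.symm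
  have h12 : b ≠ c := e12.ne
  have h21 : c ≠ b := h12.symm
  have h13 : b ≠ d := ne_adj e12 n23'
  have h31 : d ≠ b := h13.symm
  have h14 : b ≠ e := ne_adj e12 n24'
  have h41 : e ≠ b := h14.symm
  have h23 : c ≠ d := ne_adj e12' n13'
  have h32 : d ≠ c := h23.symm
  have h24 : c ≠ e := ne_adj e12' n14'
  have h42 : e ≠ c := h24.symm
  have h34 : d ≠ e := x34
  have h43 : e ≠ d := x34.symm
  refine h (hasInduced_mk _ _ ![a, b, c, d, e] (fun i j hij => ?_) (fun i j => ?_))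
  · fin_cases i <;> fin_cases j <;> first | exact absurd rfl hij | (simp; assumption)
  · fin_cases i <;> fin_cases j <;> simp <;>
      first
        | (refine iff_of_false ?_ (by decide); exact G.irrefl _)
        | (refine iff_of_true ?_ (by decide); assumption)
        | (refine iff_of_false ?_ (by decide); assumption)

lemma findFullHouse (h : ¬ HasInduced fullHouse G)
    {a b c d e : V}
    (e01 : G.Adj a b) (e02 : G.Adj a c) (e03 : G.Adj a d) (e12 : G.Adj b c) (e13 : G.Adj b d) (e23 : G.Adj c d) (e04 : G.Adj a e) (e14 : G.Adj b e) (n24 : ¬G.Adj c e) (n34 : ¬G.Adj d e) : False := by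
  have e01' : G.Adj b a := G.adj_symm e01
  have e02' : G.Adj c a := G.adj_symm e02
  have e03' : G.Adj d a := G.adj_symm e03
  have e12' : G.Adj c b := G.adj_symm e12
  have e13' : G.Adj d b := G.adj_symm e13
  have e23' : G.Adj d c := G.adj_symm e23
  have e04' : G.Adj e a := G.adj_symm e04
  have e14' : G.Adj e b := G.adj_symm e14
  have n24' : ¬G.Adj e c := fun hh => n24 (G.adj_symm hh)
  have n34' : ¬G.Adj e d := fun hh => n34 (G.adj_symm hh)
  have h01 : a ≠ b := e01.ne
  have h10 : b ≠ a := h01.symm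
  have h02 : a ≠ c := e02.ne
  have h20 : c ≠ a := h02.symm
  have h03 : a ≠ d := e03.ne
  have h30 : d ≠ a := h03.symm
  have h04 : a ≠ e := e04.ne
  have h40 : e ≠ a := h04.symm
  have h12 : b ≠ c := e12.ne
  have h21 : c ≠ b := h12.symm
  have h13 : b ≠ d := e13.ne
  have h31 : d ≠ b := h13.symm
  have h14 : b ≠ e := e14.ne
  have h41 : e ≠ b := h14.symm
  have h23 : c ≠ d := e23.ne
  have h32 : d ≠ c := h23.symm
  have h24 : c ≠ e := ne_adj e23 n34'
  have h42 : e ≠ c := h24.symm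
  have h34 : d ≠ e := ne_adj e23' n24'
  have h43 : e ≠ d := h34.symm
  refine h (hasInduced_mk _ _ ![a, b, c, d, e] (fun i j hij => ?_) (fun i j => ?_))
  · fin_cases i <;> fin_cases j <;> first | exact absurd rfl hij | (simp; assumption)
  · fin_cases i <;> fin_cases j <;> simp <;>
      first
        | (refine iff_of_false ?_ (by decide); exact G.irrefl _)
        | (refine iff_of_true ?_ (by decide); assumption)
        | (refine iff_of_false ?_ (by decide); assumption)

lemma findK33 (h : ¬ HasInduced k33 G)
    {a b c d e f : V}
    (e03 : G.Adj a d) (e04 : G.Adj a e) (e05 : G.Adj a f) (e13 : G.Adj b d) (e14 : G.Adj b e) (e15 : G.Adj b f) (e23 : G.Adj c d) (e24 : G.Adj c e) (e25 : G.Adj c f) (n01 : ¬G.Adj a b) (n02 : ¬G.Adj a c) (n12 : ¬G.Adj b c) (n34 : ¬G.Adj d e) (n35 : ¬G.Adj d f) (n45 : ¬G.Adj e f) (x01 : a ≠ b) (x02 : a ≠ c) (x12 : b ≠ c) (x34 : d ≠ e) (x35 : d ≠ f) (x45 : e ≠ f) : False := by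
  have e03' : G.Adj d a := G.adj_symm e03
  have e04' : G.Adj e a := G.adj_symm e04
  have e05' : G.Adj f a := G.adj_symm e05
  have e13' : G.Adj d b := G.adj_symm e13
  have e14' : G.Adj e b := G.adj_symm e14
  have e15' : G.Adj f b := G.adj_symm e15
  have e23' : G.Adj d c := G.adj_symm e23
  have e24' : G.Adj e c := G.adj_symm e24
  have e25' : G.Adj f c := G.adj_symm e25
  have n01' : ¬G.Adj b a := fun hh => n01 (G.adj_symm hh)
  have n02' : ¬G.Adj c a := fun hh => n02 (G.adj_symm hh)
  have n12' : ¬G.Adj c b := fun hh => n12 (G.adj_symm hh)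
  have n34' : ¬G.Adj e d := fun hh => n34 (G.adj_symm hh)
  have n35' : ¬G.Adj f d := fun hh => n35 (G.adj_symm hh)
  have n45' : ¬G.Adj f e := fun hh => n45 (G.adj_symm hh)
  have h01 : a ≠ b := x01
  have h10 : b ≠ a := x01.symm
  have h02 : a ≠ c := x02
  have h20 : c ≠ a := x02.symm
  have h03 : a ≠ d := e03.ne
  have h30 : d ≠ a := h03.symm
  have h04 : a ≠ e := e04.ne
  have h40 : e ≠ a := h04.symm
  have h05 : a ≠ f := e05.ne
  have h50 : f ≠ a := h05.symm
  have h12 : b ≠ c := x12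
  have h21 : c ≠ b := x12.symm
  have h13 : b ≠ d := e13.ne
  have h31 : d ≠ b := h13.symm
  have h14 : b ≠ e := e14.ne
  have h41 : e ≠ b := h14.symm
  have h15 : b ≠ f := e15.ne
  have h51 : f ≠ b := h15.symm
  have h23 : c ≠ d := e23.ne
  have h32 : d ≠ c := h23.symm
  have h24 : c ≠ e := e24.ne
  have h42 : e ≠ c := h24.symm
  have h25 : c ≠ f := e25.ne
  have h52 : f ≠ c := h25.symm
  have h34 : d ≠ e := x34
  have h43 : e ≠ d := x34.symm
  have h35 : d ≠ f := x35
  have h53 : f ≠ d := x35.symm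
  have h45 : e ≠ f := x45
  have h54 : f ≠ e := x45.symm
  refine h (hasInduced_mk _ _ ![a, b, c, d, e, f] (fun i j hij => ?_) (fun i j => ?_))
  · fin_cases i <;> fin_cases j <;> first | exact absurd rfl hij | (simp; assumption)
  · fin_cases i <;> fin_cases j <;> simp <;>
      first
        | (refine iff_of_false ?_ (by decide); exact G.irrefl _)
        | (refine iff_of_true ?_ (by decide); assumption)
        | (refine iff_of_false ?_ (by decide); assumption)

lemma findW5 (h : ¬ HasInduced wheelW5 G)
    {a b c d e : V}
    (e01 : G.Adj a b) (e02 : G.Adj a c) (e03 : G.Adj a d) (e04 : G.Adj a e) (e12 : G.Adj b c) (e23 : G.Adj c d) (e34 : G.Adj d e) (e14 : G.Adj b e) (n13 : ¬G.Adj b d) (n24 : ¬G.Adj c e) (x13 : b ≠ d) (x24 : c ≠ e) : False := by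
  have e01' : G.Adj b a := G.adj_symm e01
  have e02' : G.Adj c a := G.adj_symm e02
  have e03' : G.Adj d a := G.adj_symm e03
  have e04' : G.Adj e a := G.adj_symm e04
  have e12' : G.Adj c b := G.adj_symm e12
  have e23' : G.Adj d c := G.adj_symm e23
  have e34' : G.Adj e d := G.adj_symm e34
  have e14' : G.Adj e b := G.adj_symm e14
  have n13' : ¬G.Adj d b := fun hh => n13 (G.adj_symm hh)
  have n24' : ¬G.Adj e c := fun hh => n24 (G.adj_symm hh)
  have h01 : a ≠ b := e01.ne
  have h10 : b ≠ a := h01.symm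
  have h02 : a ≠ c := e02.ne
  have h20 : c ≠ a := h02.symm
  have h03 : a ≠ d := e03.ne
  have h30 : d ≠ a := h03.symm
  have h04 : a ≠ e := e04.ne
  have h40 : e ≠ a := h04.symm
  have h12 : b ≠ c := e12.ne
  have h21 : c ≠ b := h12.symm
  have h13 : b ≠ d := x13
  have h31 : d ≠ b := x13.symm
  have h14 : b ≠ e := e14.ne
  have h41 : e ≠ b := h14.symm
  have h23 : c ≠ d := e23.ne
  have h32 : d ≠ c := h23.symm
  have h24 : c ≠ e := x24
  have h42 : e ≠ c := x24.symm
  have h34 : d ≠ e := e34.ne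
  have h43 : e ≠ d := h34.symm
  refine h (hasInduced_mk _ _ ![a, b, c, d, e] (fun i j hij => ?_) (fun i j => ?_))
  · fin_cases i <;> fin_cases j <;> first | exact absurd rfl hij | (simp; assumption)
  · fin_cases i <;> fin_cases j <;> simp <;>
      first
        | (refine iff_of_false ?_ (by decide); exact G.irrefl _)
        | (refine iff_of_true ?_ (by decide); assumption)
        | (refine iff_of_false ?_ (by decide); assumption)

end Finders

section Main
variable {V : Type*} [DecidableEq V] {G : SimpleGraph V}

lemma main_construction [Fintype V]
    (hP4 : ¬ HasInduced pathP4 G) (hP3K2 : ¬ HasInduced p3PlusK2 G)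
    (h3K2 : ¬ HasInduced threeK2 G) (hDart : ¬ HasInduced dart G)
    (hLt : ¬ HasInduced ltimesGraph G) (hFH : ¬ HasInduced fullHouse G)
    (hK33 : ¬ HasInduced k33 G) (hW5 : ¬ HasInduced wheelW5 G) :
    ∃ A B D : Finset V, IsValid G A B D := by
  classical
  cases Classical.em (∃ x y z : V, G.Adj x y ∧ G.Adj y z ∧ x ≠ z ∧ ¬G.Adj x z) with
  | inr htr =>
    -- CASE A : adjacency is transitive, G is a disjoint union of cliques
    push_neg at htr
    have htrans : ∀ x y z : V, G.Adj x y → G.Adj y z → x ≠ z → G.Adj x z := by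
      intro x y z h1 h2 hne
      by_contra hc
      exact hc (htr x y z h1 h2 hne)
    have cliq : ∀ w u v : V, (u = w ∨ G.Adj u w) → (v = w ∨ G.Adj v w) → u ≠ v → G.Adj u v := by
      rintro w u v (rfl | hu) (rfl | hv) huv
      · exact absurd rfl huv
      · exact G.adj_symm hv
      · exact hu
      · exact htrans u w v hu (G.adj_symm hv) huv
    have hcl : ∀ w u v : V, (u = w ∨ G.Adj u w) → G.Adj u v → (v = w ∨ G.Adj v w) := by
      intro w u v hu hadj
      by_cases hvw : v = w
      · exact Or.inl hvw
      · rcases hu with rfl | hu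
        · exact Or.inr (G.adj_symm hadj)
        · exact Or.inr (htrans v u w (G.adj_symm hadj) hu hvw)
    cases Classical.em (∃ x y : V, G.Adj x y) with
    | inr hnoedge =>
      push_neg at hnoedge
      exact ⟨∅, ∅, ∅, by simp, by simp, by simp, by simp, by simp, by simp,
        by simp, fun v _ _ _ u => hnoedge v u⟩
    | inl hedge =>
      obtain ⟨x₀, y₀, hxy⟩ := hedge
      set A : Finset V := Finset.univ.filter (fun u => u = x₀ ∨ G.Adj u x₀) with hAdef
      have hmemA : ∀ u, u ∈ A ↔ (u = x₀ ∨ G.Adj u x₀) := by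
        intro u; simp [hAdef]
      cases Classical.em (∃ u v : V, G.Adj u v ∧ u ∉ A) with
      | inr hBempty =>
        push_neg at hBempty
        refine ⟨A, ∅, ∅, ?_, by simp, by simp, by simp, by simp, by simp, by simp, ?_⟩
        · intro u hu v hv huv
          exact cliq x₀ u v ((hmemA u).1 hu) ((hmemA v).1 hv) huv
        · intro v hvA _ _ u hadj
          exact hvA (hBempty v u hadj)
      | inl hBne =>
        obtain ⟨u₀, v₀, huv, hu₀A⟩ := hBne
        set B : Finset V := Finset.univ.filter (fun w => w = u₀ ∨ G.Adj w u₀) with hBdef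
        have hmemB : ∀ u, u ∈ B ↔ (u = u₀ ∨ G.Adj u u₀) := by
          intro u; simp [hBdef]
        -- being in B implies not in A
        have hBnA : ∀ w, (w = u₀ ∨ G.Adj w u₀) → w ∉ A := by
          rintro w hw hwA
          rcases hw with rfl | hw
          · exact hu₀A hwA
          · exact hu₀A ((hmemA u₀).2 (hcl x₀ w u₀ ((hmemA w).1 hwA) hw))
        refine ⟨A, B, ∅, ?_, ?_, by simp, ?_, by simp, by simp, ?_, ?_⟩
        · intro u hu v hv huv
          exact cliq x₀ u v ((hmemA u).1 hu) ((hmemA v).1 hv) huv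
        · intro u hu v hv huv
          exact cliq u₀ u v ((hmemB u).1 hu) ((hmemB v).1 hv) huv
        · -- hAB
          intro u hu v hv hadj
          exact hBnA v ((hmemB v).1 hv) ((hmemA v).2 (hcl x₀ u v ((hmemA u).1 hu) hadj))
        · -- disjoint
          rw [Finset.disjoint_left]
          intro w hwA hwB
          exact hBnA w ((hmemB w).1 hwB) hwA
        · -- hout : find 3K₂
          intro v hvA hvB _ u hadj
          have huA : u ∉ A := fun huA => hvA ((hmemA v).2 (hcl x₀ u v ((hmemA u).1 huA) (G.adj_symm hadj)))
          have huB : u ∉ B := fun huB => hvB ((hmemB v).2 (hcl u₀ u v ((hmemB u).1 huB) (G.adj_symm hadj)))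
          have hnA : ∀ w, w ∉ A → ¬ G.Adj w x₀ := by
            intro w hw hc
            exact hw ((hmemA w).2 (Or.inr hc))
          have hnB : ∀ w, w ∉ B → ¬ G.Adj w u₀ := by
            intro w hw hc
            exact hw ((hmemB w).2 (Or.inr hc))
          have hy₀A : y₀ ∈ A := (hmemA y₀).2 (Or.inr (G.adj_symm hxy))
          have hv₀B : v₀ ∈ B := (hmemB v₀).2 (Or.inr (G.adj_symm huv))
          have hv₀A : v₀ ∉ A := hBnA v₀ ((hmemB v₀).1 hv₀B)
          -- nonadjacency facts
          have nx₀u₀ : ¬ G.Adj x₀ u₀ := fun hc => hnA u₀ hu₀A (G.adj_symm hc)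
          have nx₀v₀ : ¬ G.Adj x₀ v₀ := fun hc => hnA v₀ hv₀A (G.adj_symm hc)
          have ny₀u₀ : ¬ G.Adj y₀ u₀ := by
            intro hc
            exact hu₀A ((hmemA u₀).2 (hcl x₀ y₀ u₀ ((hmemA y₀).1 hy₀A) hc))
          have ny₀v₀ : ¬ G.Adj y₀ v₀ := by
            intro hc
            exact hv₀A ((hmemA v₀).2 (hcl x₀ y₀ v₀ ((hmemA y₀).1 hy₀A) hc))
          have nx₀v : ¬ G.Adj x₀ v := fun hc => hvA ((hmemA v).2 (Or.inr (G.adj_symm hc)))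
          have nx₀u : ¬ G.Adj x₀ u := fun hc => huA ((hmemA u).2 (Or.inr (G.adj_symm hc)))
          have ny₀v : ¬ G.Adj y₀ v := by
            intro hc
            exact hvA ((hmemA v).2 (hcl x₀ y₀ v ((hmemA y₀).1 hy₀A) hc))
          have ny₀u : ¬ G.Adj y₀ u := by
            intro hc
            exact huA ((hmemA u).2 (hcl x₀ y₀ u ((hmemA y₀).1 hy₀A) hc))
          have nu₀v : ¬ G.Adj u₀ v := fun hc => hvB ((hmemB v).2 (Or.inr (G.adj_symm hc)))
          have nu₀u : ¬ G.Adj u₀ u := fun hc => huB ((hmemB u).2 (Or.inr (G.adj_symm hc)))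
          have nv₀v : ¬ G.Adj v₀ v := by
            intro hc
            exact hvB ((hmemB v).2 (hcl u₀ v₀ v ((hmemB v₀).1 hv₀B) hc))
          have nv₀u : ¬ G.Adj v₀ u := by
            intro hc
            exact huB ((hmemB u).2 (hcl u₀ v₀ u ((hmemB v₀).1 hv₀B) hc))
          exact find3K2 h3K2 hxy huv hadj nx₀u₀ nx₀v₀ nx₀v nx₀u ny₀u₀ ny₀v₀ ny₀v ny₀u
            nu₀v nu₀u nv₀v nv₀u
  | inl hP3 =>
    obtain ⟨p, q, r, hpq, hqr, hpr_ne, hpr⟩ := hP3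
    have hqp : G.Adj q p := G.adj_symm hpq
    have hrp_ne : r ≠ p := hpr_ne.symm
    have hrp : ¬ G.Adj r p := fun hc => hpr (G.adj_symm hc)
    cases Classical.em (∃ s t : V, (G.Adj s p ∧ G.Adj s r) ∧ (G.Adj t p ∧ G.Adj t r) ∧ G.Adj s t) with
    | inl hSedge =>
      -- CASE B1 : some edge inside the common neighbourhood S of p and r
      obtain ⟨s, t, ⟨hsp, hsr⟩, ⟨htp, htr⟩, hst⟩ := hSedge
      have claim1 : ∀ p' r' s' t' : V, ¬G.Adj p' r' → G.Adj s' p' → G.Adj s' r' →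
          G.Adj t' p' → G.Adj t' r' → G.Adj s' t' → ∀ w, G.Adj w p' → G.Adj w r' := by
        intro p' r' s' t' hpr' hsp' hsr' htp' htr' hst' w hwp
        by_contra hwr
        by_cases hwt : G.Adj w t'
        · by_cases hws : G.Adj w s'
          · exact findFullHouse hFH hst' (G.adj_symm hws) hsp' (G.adj_symm hwt) htp' hwp hsr' htr' hwr hpr'
          · exact findP4 hP4 hwp (G.adj_symm hsp') hsr' hws hwr hpr'
        · exact findP4 hP4 hwp (G.adj_symm htp') htr' hwt hwr hpr'
      have c1 : ∀ w, G.Adj w p ↔ G.Adj w r :=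
        fun w => ⟨claim1 p r s t hpr hsp hsr htp htr hst w,
                  claim1 r p s t hrp hsr hsp htr htp hst w⟩
      have c2a : ∀ w, ¬G.Adj w p → ¬G.Adj w r → ∀ u, G.Adj w u →
          ∀ σ, G.Adj σ p → G.Adj σ r → G.Adj w σ := by
        intro w hwp hwr u hwu σ hσp hσr
        by_contra hwσ
        by_cases hup : G.Adj u p
        · have hur : G.Adj u r := claim1 p r s t hpr hsp hsr htp htr hst u hup
          by_cases huσ : G.Adj u σ
          · exact findDart hDart huσ hup hur hσp hσr (G.adj_symm hwu)
              (fun hc => hwσ (G.adj_symm hc)) hpr (fun hc => hwp (G.adj_symm hc))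
              (fun hc => hwr (G.adj_symm hc)) hpr_ne
          · exact findP4 hP4 hwu hup (G.adj_symm hσp) hwp hwσ huσ
        · have hur : ¬G.Adj u r := fun hc => hup (claim1 r p s t hrp hsr hsp htr htp hst u hc)
          by_cases huσ : G.Adj u σ
          · exact findP4 hP4 hwu huσ hσp hwσ hwp hup
          · exact findP3K2 hP3K2 (G.adj_symm hσp) hσr hwu hpr
              (fun hc => hwp (G.adj_symm hc)) (fun hc => hup (G.adj_symm hc))
              (fun hc => hwσ (G.adj_symm hc)) (fun hc => huσ (G.adj_symm hc))
              (fun hc => hwr (G.adj_symm hc)) (fun hc => hur (G.adj_symm hc)) hpr_ne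
      have c2b : ∀ w₁ w₂, ¬G.Adj w₁ p → ¬G.Adj w₁ r → ¬G.Adj w₂ p → ¬G.Adj w₂ r →
          G.Adj w₁ w₂ → False := by
        intro w₁ w₂ h1p h1r h2p h2r hadj
        have h1s : G.Adj w₁ s := c2a w₁ h1p h1r w₂ hadj s hsp hsr
        have h2s : G.Adj w₂ s := c2a w₂ h2p h2r w₁ (G.adj_symm hadj) s hsp hsr
        exact findLtimes hLt (G.adj_symm h1s) hadj (G.adj_symm h2s) hsp hsr
          h1p h1r h2p h2r hpr hpr_ne
      have c4a : ∀ σ₁ σ₂ σ₃, (G.Adj σ₁ p ∧ G.Adj σ₁ r) → (G.Adj σ₂ p ∧ G.Adj σ₂ r) →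
          (G.Adj σ₃ p ∧ G.Adj σ₃ r) → G.Adj σ₁ σ₂ → G.Adj σ₂ σ₃ → σ₁ ≠ σ₃ → G.Adj σ₁ σ₃ := by
        intro σ₁ σ₂ σ₃ h1 h2 h3 h12 h23 hne
        by_contra hc
        exact findW5 hW5 (G.adj_symm h12) h2.1 h23 h2.2 h1.1 (G.adj_symm h3.1) h3.2 h1.2
          hc hpr hne hpr_ne
      refine ⟨Finset.univ.filter (fun σ => (G.Adj σ p ∧ G.Adj σ r) ∧ (σ = s ∨ G.Adj σ s)),
        Finset.univ.filter (fun σ => (G.Adj σ p ∧ G.Adj σ r) ∧ ¬(σ = s ∨ G.Adj σ s)),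
        Finset.univ.filter (fun w => ¬G.Adj w p ∧ ¬G.Adj w r ∧ ∃ u, G.Adj w u),
        ?_, ?_, ?_, ?_, ?_, ?_, ?_, ?_⟩
      · -- hA
        intro u hu v hv huv
        simp only [Finset.mem_filter, Finset.mem_univ, true_and] at hu hv
        obtain ⟨⟨hup, hur⟩, hus⟩ := hu
        obtain ⟨⟨hvp, hvr⟩, hvs⟩ := hv
        rcases hus with rfl | hus
        · rcases hvs with rfl | hvs
          · exact absurd rfl huv
          · exact G.adj_symm hvs
        · rcases hvs with rfl | hvs
          · exact hus
          · exact c4a u s v ⟨hup, hur⟩ ⟨hsp, hsr⟩ ⟨hvp, hvr⟩ hus (G.adj_symm hvs) huv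
      · -- hB
        intro u hu v hv huv
        simp only [Finset.mem_filter, Finset.mem_univ, true_and, not_or] at hu hv
        obtain ⟨⟨hup, hur⟩, hu_ne, hus⟩ := hu
        obtain ⟨⟨hvp, hvr⟩, hv_ne, hvs⟩ := hv
        by_contra hne
        have hut : ¬G.Adj u t := fun hut =>
          hus (c4a u t s ⟨hup, hur⟩ ⟨htp, htr⟩ ⟨hsp, hsr⟩ hut (G.adj_symm hst) hu_ne)
        have hvt : ¬G.Adj v t := fun hvt =>
          hvs (c4a v t s ⟨hvp, hvr⟩ ⟨htp, htr⟩ ⟨hsp, hsr⟩ hvt (G.adj_symm hst) hv_ne)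
        exact findLtimes hLt (G.adj_symm hsp) hst (G.adj_symm htp) (G.adj_symm hup) (G.adj_symm hvp)
          (fun hc => hus (G.adj_symm hc)) (fun hc => hvs (G.adj_symm hc))
          (fun hc => hut (G.adj_symm hc)) (fun hc => hvt (G.adj_symm hc)) hne huv
      · -- hD
        intro u hu v hv huv hadj
        simp only [Finset.mem_filter, Finset.mem_univ, true_and] at hu hv
        exact c2b u v hu.1 hu.2.1 hv.1 hv.2.1 hadj
      · -- hAB
        intro u hu v hv hadj
        simp only [Finset.mem_filter, Finset.mem_univ, true_and, not_or] at hu hv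
        obtain ⟨⟨hup, hur⟩, hus⟩ := hu
        obtain ⟨⟨hvp, hvr⟩, hv_ne, hvs⟩ := hv
        rcases hus with rfl | hus
        · exact hvs (G.adj_symm hadj)
        · exact hvs (c4a v u s ⟨hvp, hvr⟩ ⟨hup, hur⟩ ⟨hsp, hsr⟩ (G.adj_symm hadj) hus hv_ne)
      · -- hAD
        intro u hu w hw
        simp only [Finset.mem_filter, Finset.mem_univ, true_and] at hu hw
        obtain ⟨hw1, hw2, u', hwu'⟩ := hw
        exact G.adj_symm (c2a w hw1 hw2 u' hwu' u hu.1.1 hu.1.2)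
      · -- hBD
        intro u hu w hw
        simp only [Finset.mem_filter, Finset.mem_univ, true_and] at hu hw
        obtain ⟨hw1, hw2, u', hwu'⟩ := hw
        exact G.adj_symm (c2a w hw1 hw2 u' hwu' u hu.1.1 hu.1.2)
      · -- disjoint
        rw [Finset.disjoint_left]
        intro w hwA hwB
        simp only [Finset.mem_filter, Finset.mem_univ, true_and] at hwA hwB
        exact hwB.2 hwA.2
      · -- hout
        intro v hvA hvB hvD u hadj
        simp only [Finset.mem_filter, Finset.mem_univ, true_and] at hvA hvB hvD
        by_cases hvp : G.Adj v p
        · have hvr : G.Adj v r := (c1 v).1 hvp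
          by_cases hvs : v = s ∨ G.Adj v s
          · exact hvA ⟨⟨hvp, hvr⟩, hvs⟩
          · exact hvB ⟨⟨hvp, hvr⟩, hvs⟩
        · have hvr : ¬G.Adj v r := fun hc => hvp ((c1 v).2 hc)
          exact hvD ⟨hvp, hvr, u, hadj⟩
    | inr hSnoedge =>
      -- CASE B2 : the common neighbourhood S of p and r is independent
      push_neg at hSnoedge
      have hSind : ∀ σ τ, (G.Adj σ p ∧ G.Adj σ r) → (G.Adj τ p ∧ G.Adj τ r) → ¬G.Adj σ τ :=
        hSnoedge
      have L : ∀ w, ¬G.Adj w p → ¬G.Adj w r → ∀ u, G.Adj w u →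
          ∀ σ, G.Adj σ p → G.Adj σ r → G.Adj w σ := by
        intro w hwp hwr u hwu σ hσp hσr
        by_contra hwσ
        by_cases huσ : G.Adj u σ
        · by_cases hup : G.Adj u p
          · by_cases hur : G.Adj u r
            · exact hSind u σ ⟨hup, hur⟩ ⟨hσp, hσr⟩ huσ
            · exact findP4 hP4 hwu huσ hσr hwσ hwr hur
          · exact findP4 hP4 hwu huσ hσp hwσ hwp hup
        · by_cases hup : G.Adj u p
          · exact findP4 hP4 hwu hup (G.adj_symm hσp) hwp hwσ huσ
          · by_cases hur : G.Adj u r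
            · exact findP4 hP4 hwu hur (G.adj_symm hσr) hwr hwσ huσ
            · exact findP3K2 hP3K2 (G.adj_symm hσp) hσr hwu hpr (fun hc => hwp (G.adj_symm hc))
                (fun hc => hup (G.adj_symm hc)) (fun hc => hwσ (G.adj_symm hc))
                (fun hc => huσ (G.adj_symm hc)) (fun hc => hwr (G.adj_symm hc))
                (fun hc => hur (G.adj_symm hc)) hpr_ne
      have L2 : ∀ p' r', ¬G.Adj p' r' → ∀ w, G.Adj w p' → ¬G.Adj w r' →
          ∀ σ, G.Adj σ p' → G.Adj σ r' → G.Adj w σ := by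
        intro p' r' hpr' w hwp hwr σ hσp hσr
        by_contra hwσ
        exact findP4 hP4 hwp (G.adj_symm hσp) hσr hwσ hwr hpr'
      cases Classical.em (∃ z : V, z ≠ p ∧ z ≠ r ∧ ¬G.Adj z p ∧ ¬G.Adj z r ∧ ∃ u, G.Adj z u) with
      | inl hZ =>
        -- CASE B2b
        obtain ⟨z, hz_p, hz_r, hzp, hzr, u₀, hzu⟩ := hZ
        have hzq : G.Adj z q := L z hzp hzr u₀ hzu q hqp hqr
        have hPgen : ∀ p' r', ¬G.Adj p' r' → G.Adj q p' → G.Adj q r' →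
            z ≠ p' → z ≠ r' → ¬G.Adj z p' → ¬G.Adj z r' →
            ∀ w, G.Adj w p' → G.Adj w r' := by
          intro p' r' hpr' hqp' hqr' hzp_ne hzr_ne hzp' hzr' w hwp
          by_contra hwr
          have hwq : G.Adj w q := L2 p' r' hpr' w hwp hwr q hqp' hqr'
          by_cases hwz : G.Adj w z
          · exact findDart hDart (G.adj_symm hwq) (G.adj_symm hzq) hqp' hwz hwp hqr'
              hwr hzp' hzr' hpr' hzp_ne
          · exact findLtimes hLt hqp' (G.adj_symm hwp) (G.adj_symm hwq) (G.adj_symm hzq) hqr'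
              (fun hc => hzp' (G.adj_symm hc)) hpr' hwz hwr hzr' hzr_ne
        have hPp : ∀ w, G.Adj w p → G.Adj w r :=
          hPgen p r hpr hqp hqr hz_p hz_r hzp hzr
        have hPr : ∀ w, G.Adj w r → G.Adj w p :=
          hPgen r p hrp hqr hqp hz_r hz_p hzr hzp
        have hS2 : ∀ σ₁ σ₂ σ₃, (G.Adj σ₁ p ∧ G.Adj σ₁ r) → (G.Adj σ₂ p ∧ G.Adj σ₂ r) →
            (G.Adj σ₃ p ∧ G.Adj σ₃ r) → σ₁ = σ₂ ∨ σ₁ = σ₃ ∨ σ₂ = σ₃ := by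
          intro σ₁ σ₂ σ₃ h1 h2 h3
          by_contra hc
          push_neg at hc
          obtain ⟨h12, h13, h23⟩ := hc
          exact findK33 hK33 (G.adj_symm h1.1) (G.adj_symm h2.1) (G.adj_symm h3.1)
            (G.adj_symm h1.2) (G.adj_symm h2.2) (G.adj_symm h3.2)
            (L z hzp hzr u₀ hzu σ₁ h1.1 h1.2) (L z hzp hzr u₀ hzu σ₂ h2.1 h2.2)
            (L z hzp hzr u₀ hzu σ₃ h3.1 h3.2)
            hpr (fun hc' => hzp (G.adj_symm hc')) (fun hc' => hzr (G.adj_symm hc'))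
            (hSind σ₁ σ₂ h1 h2) (hSind σ₁ σ₃ h1 h3) (hSind σ₂ σ₃ h2 h3)
            hpr_ne hz_p.symm hz_r.symm h12 h13 h23
        refine ⟨Finset.univ.filter (fun σ => G.Adj σ p ∧ G.Adj σ r ∧ σ = q),
          Finset.univ.filter (fun σ => G.Adj σ p ∧ G.Adj σ r ∧ σ ≠ q),
          Finset.univ.filter (fun w => ¬G.Adj w p ∧ ¬G.Adj w r ∧ ∃ u, G.Adj w u),
          ?_, ?_, ?_, ?_, ?_, ?_, ?_, ?_⟩
        · intro u hu v hv huv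
          simp only [Finset.mem_filter, Finset.mem_univ, true_and] at hu hv
          exact absurd (hu.2.2.trans hv.2.2.symm) huv
        · intro u hu v hv huv
          simp only [Finset.mem_filter, Finset.mem_univ, true_and] at hu hv
          rcases hS2 q u v ⟨hqp, hqr⟩ ⟨hu.1, hu.2.1⟩ ⟨hv.1, hv.2.1⟩ with h | h | h
          · exact absurd h.symm hu.2.2
          · exact absurd h.symm hv.2.2
          · exact absurd h huv
        · intro u hu v hv huv hadj
          simp only [Finset.mem_filter, Finset.mem_univ, true_and] at hu hv
          have h1q : G.Adj u q := L u hu.1 hu.2.1 v hadj q hqp hqr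
          have h2q : G.Adj v q := L v hv.1 hv.2.1 u (G.adj_symm hadj) q hqp hqr
          exact findLtimes hLt (G.adj_symm h1q) hadj (G.adj_symm h2q) hqp hqr
            hu.1 hu.2.1 hv.1 hv.2.1 hpr hpr_ne
        · intro u hu v hv hadj
          simp only [Finset.mem_filter, Finset.mem_univ, true_and] at hu hv
          exact hSind u v ⟨hu.1, hu.2.1⟩ ⟨hv.1, hv.2.1⟩ hadj
        · intro u hu w hw
          simp only [Finset.mem_filter, Finset.mem_univ, true_and] at hu hw
          obtain ⟨hw1, hw2, u', hwu'⟩ := hw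
          exact G.adj_symm (L w hw1 hw2 u' hwu' u hu.1 hu.2.1)
        · intro u hu w hw
          simp only [Finset.mem_filter, Finset.mem_univ, true_and] at hu hw
          obtain ⟨hw1, hw2, u', hwu'⟩ := hw
          exact G.adj_symm (L w hw1 hw2 u' hwu' u hu.1 hu.2.1)
        · rw [Finset.disjoint_left]
          intro w hwA hwB
          simp only [Finset.mem_filter, Finset.mem_univ, true_and] at hwA hwB
          exact hwB.2.2 hwA.2.2
        · intro v hvA hvB hvD u hadj
          simp only [Finset.mem_filter, Finset.mem_univ, true_and] at hvA hvB hvD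
          by_cases hvp : G.Adj v p
          · have hvr : G.Adj v r := hPp v hvp
            by_cases hvq : v = q
            · exact hvA ⟨hvp, hvr, hvq⟩
            · exact hvB ⟨hvp, hvr, hvq⟩
          · have hvr : ¬G.Adj v r := fun hc => hvp (hPr v hc)
            exact hvD ⟨hvp, hvr, u, hadj⟩
      | inr hZ =>
        -- CASE B2a
        push_neg at hZ
        have hnoZ : ∀ z, z ≠ p → z ≠ r → ¬G.Adj z p → ¬G.Adj z r → ∀ u, ¬G.Adj z u := hZ
        refine ⟨Finset.univ.filter (fun w => w = p ∨ (G.Adj w p ∧ ¬G.Adj w r)),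
          Finset.univ.filter (fun w => w = r ∨ (G.Adj w r ∧ ¬G.Adj w p)),
          Finset.univ.filter (fun w => G.Adj w p ∧ G.Adj w r),
          ?_, ?_, ?_, ?_, ?_, ?_, ?_, ?_⟩
        · intro u hu v hv huv
          simp only [Finset.mem_filter, Finset.mem_univ, true_and] at hu hv
          rcases hu with rfl | ⟨hup, hur⟩
          · rcases hv with rfl | ⟨hvp, hvr⟩
            · exact absurd rfl huv
            · exact G.adj_symm hvp
          · rcases hv with rfl | ⟨hvp, hvr⟩
            · exact hup
            · by_contra hne
              exact findDart hDart hqp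
                (G.adj_symm (L2 p r hpr u hup hur q hqp hqr))
                (G.adj_symm (L2 p r hpr v hvp hvr q hqp hqr))
                (G.adj_symm hup) (G.adj_symm hvp) hqr
                hpr hne hur hvr huv
        · intro u hu v hv huv
          simp only [Finset.mem_filter, Finset.mem_univ, true_and] at hu hv
          rcases hu with rfl | ⟨hur, hup⟩
          · rcases hv with rfl | ⟨hvr, hvp⟩
            · exact absurd rfl huv
            · exact G.adj_symm hvr
          · rcases hv with rfl | ⟨hvr, hvp⟩
            · exact hur
            · by_contra hne
              exact findDart hDart hqr
                (G.adj_symm (L2 r p hrp u hur hup q hqr hqp))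
                (G.adj_symm (L2 r p hrp v hvr hvp q hqr hqp))
                (G.adj_symm hur) (G.adj_symm hvr) hqp
                hrp hne hup hvp huv
        · intro u hu v hv huv hadj
          simp only [Finset.mem_filter, Finset.mem_univ, true_and] at hu hv
          exact hSind u v ⟨hu.1, hu.2⟩ ⟨hv.1, hv.2⟩ hadj
        · -- hAB
          intro u hu v hv hadj
          simp only [Finset.mem_filter, Finset.mem_univ, true_and] at hu hv
          rcases hu with rfl | ⟨hup, hur⟩
          · rcases hv with rfl | ⟨hvr, hvp⟩
            · exact hpr hadj
            · exact hvp (G.adj_symm hadj)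
          · rcases hv with rfl | ⟨hvr, hvp⟩
            · exact hur hadj
            · exact findP4 hP4 (G.adj_symm hup) hadj hvr
                (fun hc => hvp (G.adj_symm hc)) hpr hur
        · -- hAD
          intro u hu w hw
          simp only [Finset.mem_filter, Finset.mem_univ, true_and] at hu hw
          rcases hu with rfl | ⟨hup, hur⟩
          · exact G.adj_symm hw.1
          · exact L2 p r hpr u hup hur w hw.1 hw.2
        · -- hBD
          intro u hu w hw
          simp only [Finset.mem_filter, Finset.mem_univ, true_and] at hu hw
          rcases hu with rfl | ⟨hur, hup⟩
          · exact G.adj_symm hw.2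
          · exact L2 r p hrp u hur hup w hw.2 hw.1
        · rw [Finset.disjoint_left]
          intro w hwA hwB
          simp only [Finset.mem_filter, Finset.mem_univ, true_and] at hwA hwB
          rcases hwA with rfl | ⟨hwp, hwr⟩
          · rcases hwB with h | ⟨hwr, _⟩
            · exact hpr_ne h
            · exact hpr hwr
          · rcases hwB with rfl | ⟨hwr', _⟩
            · exact hrp hwp
            · exact hwr hwr'
        · -- hout
          intro v hvA hvB hvD u hadj
          simp only [Finset.mem_filter, Finset.mem_univ, true_and] at hvA hvB hvD
          have hv_ne_p : v ≠ p := fun hc => hvA (Or.inl hc)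
          have hv_ne_r : v ≠ r := fun hc => hvB (Or.inl hc)
          by_cases hvp : G.Adj v p
          · by_cases hvr : G.Adj v r
            · exact hvD ⟨hvp, hvr⟩
            · exact hvA (Or.inr ⟨hvp, hvr⟩)
          · by_cases hvr : G.Adj v r
            · exact hvB (Or.inr ⟨hvr, hvp⟩)
            · exact hnoZ v hv_ne_p hv_ne_r hvp hvr u hadj
end Main

theorem stmt19 {V : Type*} [Fintype V] [DecidableEq V] (G : SimpleGraph V) :
    c2 G ≤ 2 ↔
      ¬ HasInduced pathP4 G ∧ ¬ HasInduced p3PlusK2 G ∧ ¬ HasInduced threeK2 G ∧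
      ¬ HasInduced dart G ∧ ¬ HasInduced ltimesGraph G ∧ ¬ HasInduced fullHouse G ∧
      ¬ HasInduced k33 G ∧ ¬ HasInduced wheelW5 G := by
  constructor
  · intro h2
    have hg : GoodSets G := goodSets_of_c2_le h2
    refine ⟨?_, ?_, ?_, ?_, ?_, ?_, ?_, ?_⟩ <;> intro hind
    · exact not_good_pathP4 (hg.hered hind)
    · exact not_good_p3PlusK2 (hg.hered hind)
    · exact not_good_threeK2 (hg.hered hind)
    · exact not_good_dart (hg.hered hind)
    · exact not_good_ltimes (hg.hered hind)
    · exact not_good_fullHouse (hg.hered hind)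
    · exact not_good_k33 (hg.hered hind)
    · exact not_good_wheelW5 (hg.hered hind)
  · rintro ⟨h1, h2, h3, h4, h5, h6, h7, h8⟩
    obtain ⟨A, B, D, hv⟩ := main_construction h1 h2 h3 h4 h5 h6 h7 h8
    exact hv.goodSets.c2_le
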